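/- Let F : S → T be a good extension of an essentially small triangulated category S with a metric {M_i} into a triangulated category T with coproducts. If E ∈ T is a homotopy colimit of F applied to a Cauchy sequence in S, and X ∈ T satisfies y(X) ∈ Fc(S), then the natural map Hom_T(E, X) → Hom_{Mod-S}(y(E), y(X)) is an isomorphism. -/

import Mathlib

namespace Stmt4

open CategoryTheory Category Limits Pretriangulated ZeroObject

universe v u u'

variable {S : Type u} [Category.{v} S] [Preadditive S] [HasZeroObject S]
  [HasShift S ℤ] [∀ n : ℤ, (CategoryTheory.shiftFunctor S n).Additive] [Pretriangulated S]

structure TriMetric (S : Type u) [Category.{v} S] [Preadditive S] [HasZeroObject S]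
    [HasShift S ℤ] [∀ n : ℤ, (CategoryTheory.shiftFunctor S n).Additive] [Pretriangulated S] where
  M : ℕ → Set S
  zero_mem : ∀ i, (0 : S) ∈ M i
  antitone : ∀ i, M (i + 1) ⊆ M i
  ext_closed : ∀ i, ∀ T ∈ (distTriang S), T.obj₁ ∈ M i → T.obj₃ ∈ M i → T.obj₂ ∈ M i

def CauchySeq (μ : TriMetric S) (E : ℕ ⥤ S) : Prop :=
  ∀ i : ℕ, 0 < i → ∀ j : ℤ, ∃ N : ℕ, 0 < N ∧ ∀ m m' : ℕ, N ≤ m → ∀ (hmm : m < m'),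
    ∀ (D : S) (g : E.obj m' ⟶ D) (h : D ⟶ (E.obj m)⟦(1 : ℤ)⟧),
      Triangle.mk (E.map (homOfLE hmm.le)) g h ∈ (distTriang S) → D⟦j⟧ ∈ μ.M i

variable {T : Type u'} [Category.{v} T] [Preadditive T] [HasZeroObject T]
  [HasShift T ℤ] [∀ n : ℤ, (CategoryTheory.shiftFunctor T n).Additive] [Pretriangulated T]
  [HasCoproducts.{0} T]

variable (F : S ⥤ T) [F.Additive]

/-- `y : T ⥤ Mod-S` on objects: `y(X) = Hom_T(F(−), X)`. -/
def yObj (X : T) : Sᵒᵖ ⥤ AddCommGrpCat.{v} := F.op ⋙ preadditiveYoneda.obj X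

/-- `y` on morphisms. -/
def yHom {X X' : T} (φ : X ⟶ X') : yObj F X ⟶ yObj F X' :=
  Functor.whiskerLeft F.op (preadditiveYoneda.map φ)

/-- The canonical map `Y(s₀) ⟶ y(X)` induced by `k : F(s₀) ⟶ X`. -/
def yMap {s₀ : S} {X : T} (k : F.obj s₀ ⟶ X) : preadditiveYoneda.obj s₀ ⟶ yObj F X where
  app s := AddCommGrpCat.ofHom
    { toFun := fun f => F.map f ≫ k
      map_zero' := by exact (congrArg (· ≫ k) (F.map_zero _ _)).trans zero_comp
      map_add' := fun f g => by
        exact (congrArg (· ≫ k) (F.map_add (f := f) (g := g))).trans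
          (Preadditive.add_comp _ _ _ _ _ _) }
  naturality a b t := by
    ext f
    exact (congrArg (· ≫ k) (F.map_comp t.unop f)).trans (Category.assoc _ _ _)

variable (E : ℕ ⥤ S)

/-- The endomorphism "shift" of `∐ F(E_i)` used in the definition of homotopy colimits. -/
noncomputable def shiftMapCoprod : (∐ fun i : ℕ => F.obj (E.obj i)) ⟶ (∐ fun i : ℕ => F.obj (E.obj i)) :=
  Sigma.desc fun i => F.map (E.map (homOfLE (Nat.le_succ i))) ≫ Sigma.ι (fun i : ℕ => F.obj (E.obj i)) (i + 1)

/-- The map `1 − shift`. -/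
noncomputable def oneMinusShift : (∐ fun i : ℕ => F.obj (E.obj i)) ⟶ (∐ fun i : ℕ => F.obj (E.obj i)) :=
  𝟙 _ - shiftMapCoprod F E

/-- `X`, with structure maps `π` from the coproduct, is a homotopy colimit of `F ∘ E` if
the triangle `∐ F(E_i) → ∐ F(E_i) → X → Σ ∐ F(E_i)` is distinguished. -/
def IsHoColim (X : T) (π : (∐ fun i : ℕ => F.obj (E.obj i)) ⟶ X)
    (δ : X ⟶ (∐ fun i : ℕ => F.obj (E.obj i))⟦(1 : ℤ)⟧) : Prop :=
  Triangle.mk (oneMinusShift F E) π δ ∈ distTriang T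

/-- `y(X)`, equipped with the canonical maps from the `Y(E_i)`, is the colimit of
`Y(E_*)` in `Mod-S`. -/
def IsYColimit (X : T) (π : (∐ fun i : ℕ => F.obj (E.obj i)) ⟶ X) : Prop :=
  ∀ (W : Sᵒᵖ ⥤ AddCommGrpCat.{v}) (w : ∀ i : ℕ, preadditiveYoneda.obj (E.obj i) ⟶ W),
    (∀ i : ℕ, preadditiveYoneda.map (E.map (homOfLE (Nat.le_succ i))) ≫ w (i + 1) = w i) →
    ∃! u : yObj F X ⟶ W,
      ∀ i : ℕ, yMap F (Sigma.ι (fun i : ℕ => F.obj (E.obj i)) i ≫ π) ≫ u = w i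

/-- `F : S ⥤ T` is a good extension with respect to the metric `μ` if for every Cauchy
sequence `E_*` in `S` the natural map `colim Y(E_*) ⟶ y(hocolim F(E_*))` is an
isomorphism, i.e. `y(hocolim F(E_*))` is the colimit of `Y(E_*)`. -/
def GoodExtension (μ : TriMetric S) : Prop :=
  ∀ (E : ℕ ⥤ S), CauchySeq μ E →
    ∀ (X : T) (π : (∐ fun i : ℕ => F.obj (E.obj i)) ⟶ X)
      (δ : X ⟶ (∐ fun i : ℕ => F.obj (E.obj i))⟦(1 : ℤ)⟧),
      IsHoColim F E X π δ → IsYColimit F E X π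


/-- `Fc(S) ⊆ Mod-S`: the compactly supported objects. -/
def Fc (μ : TriMetric S) : Set (Sᵒᵖ ⥤ AddCommGrpCat.{v}) :=
  {A | ∀ j : ℤ, ∃ i : ℕ, ∀ s ∈ μ.M i, ∀ f : preadditiveYoneda.obj (s⟦j⟧) ⟶ A, f = 0}


section Aux
set_option linter.unusedSectionVars false

-- basic lemmas about yObj/yHom/yMap
lemma yHom_app_apply {X X' : T} (φ : X ⟶ X') (s : S) (g : F.obj s ⟶ X) :
    (yHom F φ).app (Opposite.op s) g = g ≫ φ := rfl

lemma yMap_app_apply {s₀ : S} {X : T} (k : F.obj s₀ ⟶ X) (s : S) (g : s ⟶ s₀) :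
    (yMap F k).app (Opposite.op s) g = F.map g ≫ k := rfl

lemma yMap_apply_id {s₀ : S} {X : T} (k : F.obj s₀ ⟶ X) :
    (yMap F k).app (Opposite.op s₀) (𝟙 s₀) = k := by
  rw [yMap_app_apply, F.map_id, Category.id_comp]

lemma yMap_eq_zero_iff {s₀ : S} {X : T} (k : F.obj s₀ ⟶ X) :
    yMap F k = 0 ↔ k = 0 := by
  constructor
  · intro h
    rw [← yMap_apply_id F k, h]
    rfl
  · intro h
    subst h
    ext s g
    show F.map g ≫ (0 : F.obj s₀ ⟶ X) = 0
    simp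

lemma yMap_comp_yHom {s₀ : S} {X X' : T} (k : F.obj s₀ ⟶ X) (φ : X ⟶ X') :
    yMap F k ≫ yHom F φ = yMap F (k ≫ φ) := by
  ext s g
  show (F.map g ≫ k) ≫ φ = F.map g ≫ (k ≫ φ)
  simp

lemma yoneda_comp_yMap {s₀ s₁ : S} {X : T} (e : s₀ ⟶ s₁) (k : F.obj s₁ ⟶ X) :
    preadditiveYoneda.map e ≫ yMap F k = yMap F (F.map e ≫ k) := by
  ext s g
  exact (congrArg (· ≫ k) (F.map_comp (X := s.unop) g e)).trans (Category.assoc _ _ _)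

lemma yMap_comp_natTrans {s₀ : S} {X X' : T} (k : F.obj s₀ ⟶ X)
    (Φ : yObj F X ⟶ yObj F X') :
    yMap F k ≫ Φ = yMap F (Φ.app (Opposite.op s₀) k) := by
  ext ⟨s⟩ g
  have h2 : ((yObj F X).map g.op ≫ Φ.app (Opposite.op s)) k
      = (Φ.app (Opposite.op s₀) ≫ (yObj F X').map g.op) k := by
    rw [Φ.naturality g.op]
  exact h2

lemma yHom_sub {X X' : T} (φ φ' : X ⟶ X') :
    yHom F (φ - φ') = yHom F φ - yHom F φ' := by
  ext s g
  exact Preadditive.comp_sub _ _ _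

lemma hom_zero_of_iso {X Y Z : T} (e : X ≅ Y) (h : ∀ k : Y ⟶ Z, k = 0) (k : X ⟶ Z) :
    k = 0 := by
  have h1 : k = e.hom ≫ (e.inv ≫ k) := by simp
  rw [h1, h (e.inv ≫ k), comp_zero]

/-- If all maps `Δ.obj₃ ⟶ X` and `Δ.obj₃⟦-1⟧ ⟶ X` vanish, then precomposition with
`Δ.mor₁` is bijective on maps to `X`. -/
lemma bij_precomp_of_vanish (Δ : Triangle T) (hΔ : Δ ∈ distTriang T) (X : T)
    (h3 : ∀ k : Δ.obj₃ ⟶ X, k = 0) (h3' : ∀ k : Δ.obj₃⟦(-1 : ℤ)⟧ ⟶ X, k = 0) :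
    Function.Bijective (fun a : Δ.obj₂ ⟶ X => Δ.mor₁ ≫ a) := by
  constructor
  · intro a a' h
    dsimp only at h
    have hz : Δ.mor₁ ≫ (a - a') = 0 := by
      rw [Preadditive.comp_sub, h, sub_self]
    obtain ⟨g, hg⟩ := Triangle.yoneda_exact₂ Δ hΔ (a - a') hz
    rw [h3 g, comp_zero] at hg
    exact sub_eq_zero.mp hg
  · intro x
    obtain ⟨g, hg⟩ := Triangle.yoneda_exact₂ _ (inv_rot_of_distTriang Δ hΔ) x
      (h3' ((Δ.invRotate).mor₁ ≫ x))
    exact ⟨g, hg.symm⟩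

lemma TriMetric.subset_of_le (μ : TriMetric S) {b a : ℕ} (h : b ≤ a) : μ.M a ⊆ μ.M b := by
  induction a, h using Nat.le_induction with
  | base => exact fun x hx => hx
  | succ a ha ih => exact fun x hx => ih (μ.antitone a hx)

lemma bij_of_cone_vanish [F.CommShift ℤ] [F.IsTriangulated] (Xt : T)
    (i : ℕ) (D : S) (g : E.obj (i + 1) ⟶ D) (h : D ⟶ (E.obj i)⟦(1 : ℤ)⟧)
    (hT : Triangle.mk (E.map (homOfLE (Nat.le_succ i))) g h ∈ distTriang S)
    (v0 : ∀ k : F.obj D ⟶ Xt, k = 0) (v1 : ∀ k : (F.obj D)⟦(1 : ℤ)⟧ ⟶ Xt, k = 0) :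
    Function.Bijective (fun a : (F.obj (E.obj (i + 1)))⟦(1 : ℤ)⟧ ⟶ Xt =>
      (shiftFunctor T (1 : ℤ)).map (F.map (E.map (homOfLE (Nat.le_succ i)))) ≫ a) := by
  have hΔT := F.map_distinguished _ hT
  set ΔT := F.mapTriangle.obj (Triangle.mk (E.map (homOfLE (Nat.le_succ i))) g h) with hΔTdef
  have hΔ' := rot_of_distTriang _ (rot_of_distTriang _ (rot_of_distTriang _ hΔT))
  set Δ' := ΔT.rotate.rotate.rotate with hΔ'def
  have h3 : ∀ k : Δ'.obj₃ ⟶ Xt, k = 0 := v1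
  have h3' : ∀ k : Δ'.obj₃⟦(-1 : ℤ)⟧ ⟶ Xt, k = 0 :=
    hom_zero_of_iso (((shiftEquiv T (1 : ℤ)).unitIso.app (F.obj D)).symm) v0
  have hb := bij_precomp_of_vanish Δ' hΔ' Xt h3 h3'
  have hmor : Δ'.mor₁
      = -((shiftFunctor T (1 : ℤ)).map (F.map (E.map (homOfLE (Nat.le_succ i))))) := rfl
  have heq : (fun a : (F.obj (E.obj (i + 1)))⟦(1 : ℤ)⟧ ⟶ Xt =>
      (shiftFunctor T (1 : ℤ)).map (F.map (E.map (homOfLE (Nat.le_succ i)))) ≫ a)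
      = (fun b : (F.obj (E.obj i))⟦(1 : ℤ)⟧ ⟶ Xt => -b)
        ∘ (fun a : Δ'.obj₂ ⟶ Xt => Δ'.mor₁ ≫ a) := by
    funext a
    exact (neg_neg _).symm.trans (congrArg Neg.neg (Preadditive.neg_comp _ _).symm)
  rw [heq]
  exact (Equiv.neg _).bijective.comp hb

/-- Solve `u i - r i (u (i+1)) = θ i` for all `i`, given that `r i` is bijective for `i ≥ N`. -/
lemma exists_seq_sol {A : ℕ → Type*} [∀ i, AddCommGroup (A i)]
    (r : ∀ i, A (i + 1) →+ A i) (N : ℕ) (hr : ∀ i, N ≤ i → Function.Bijective (r i))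
    (θ : ∀ i, A i) : ∃ u : ∀ i, A i, ∀ i, u i - r i (u (i + 1)) = θ i := by
  have hinv : ∀ i, N ≤ i → ∀ x : A i, r i (Function.invFun (r i) x) = x := fun i hi x =>
    Function.rightInverse_invFun (hr i hi).2 x
  have step1 : ∃ u : ∀ i, A i, ∀ i, N ≤ i → u i - r i (u (i + 1)) = θ i := by
    refine ⟨fun i => Nat.rec (motive := A) 0
      (fun i ui => Function.invFun (r i) (ui - θ i)) i, fun i hi => ?_⟩
    have : r i (Function.invFun (r i)
        ((Nat.rec (motive := A) 0 (fun i ui => Function.invFun (r i) (ui - θ i)) i) - θ i)) =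
        (Nat.rec (motive := A) 0 (fun i ui => Function.invFun (r i) (ui - θ i)) i) - θ i :=
      hinv i hi _
    dsimp only
    rw [this]
    abel
  obtain ⟨u, hu⟩ := step1
  have step2 : ∀ d : ℕ, ∃ u : ∀ i, A i, ∀ i, N - d ≤ i → u i - r i (u (i + 1)) = θ i := by
    intro d
    induction d with
    | zero => exact ⟨u, fun i hi => hu i hi⟩
    | succ d ih =>
      obtain ⟨w, hw⟩ := ih
      by_cases h0 : N - d = 0
      · exact ⟨w, fun i hi => hw i (by omega)⟩
      · set k₀ := N - (d + 1) with hk₀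
        refine ⟨fun i => if h : i = k₀ then
          cast (congrArg A h).symm (θ k₀ + r k₀ (w (k₀ + 1))) else w i, ?_⟩
        intro i hi
        rcases eq_or_lt_of_le hi with h | h
        · subst h
          dsimp only
          rw [dif_pos rfl, dif_neg (by omega : k₀ + 1 ≠ k₀)]
          have hc : (cast (congrArg A (rfl : k₀ = k₀)).symm (θ k₀ + r k₀ (w (k₀ + 1)))) =
              θ k₀ + r k₀ (w (k₀ + 1)) := eq_of_heq (cast_heq _ _)
          rw [hc]
          abel
        · dsimp only
          rw [dif_neg (by omega : i ≠ k₀), dif_neg (by omega : i + 1 ≠ k₀)]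
          exact hw i (by omega)
  obtain ⟨u', hu'⟩ := step2 N
  exact ⟨u', fun i => hu' i (by omega)⟩

/-- Key vanishing: any composite `δ ≫ θ` vanishes, for `θ` out of the shifted coproduct. -/
lemma comp_delta_zero [F.CommShift ℤ] [F.IsTriangulated] (μ : TriMetric S)
    (hE : CauchySeq μ E) (Ept : T) (π : (∐ fun i : ℕ => F.obj (E.obj i)) ⟶ Ept)
    (δ : Ept ⟶ (∐ fun i : ℕ => F.obj (E.obj i))⟦(1 : ℤ)⟧)
    (hhoc : IsHoColim F E Ept π δ)
    (Xt : T) (hX : yObj F Xt ∈ Fc μ)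
    (θ : (∐ fun i : ℕ => F.obj (E.obj i))⟦(1 : ℤ)⟧ ⟶ Xt) : δ ≫ θ = 0 := by
  obtain ⟨i₀, h₀⟩ := hX 0
  obtain ⟨i₁, h₁⟩ := hX 1
  have hv : ∀ (j : ℤ) (ij : ℕ),
      (∀ s ∈ μ.M ij, ∀ f : preadditiveYoneda.obj (s⟦j⟧) ⟶ yObj F Xt, f = 0) →
      ∀ s ∈ μ.M ij, ∀ k : F.obj (s⟦j⟧) ⟶ Xt, k = 0 := by
    intro j ij hj s hs k
    have hy := hj s hs (yMap F k)
    rw [← yMap_apply_id F k, hy]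
    rfl
  have hv0 := hv 0 i₀ h₀
  have hv1 := hv 1 i₁ h₁
  obtain ⟨N, hNpos, hN⟩ := hE (max i₀ i₁ + 1) (Nat.succ_pos _) 0
  -- the tower of abelian groups
  let r : ∀ i : ℕ, ((F.obj (E.obj (i + 1)))⟦(1 : ℤ)⟧ ⟶ Xt) →+
      ((F.obj (E.obj i))⟦(1 : ℤ)⟧ ⟶ Xt) := fun i => AddMonoidHom.mk'
    (fun a => (shiftFunctor T (1 : ℤ)).map (F.map (E.map (homOfLE (Nat.le_succ i)))) ≫ a)
    (fun a b => Preadditive.comp_add _ _ _ _ _ _)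
  have hbij : ∀ i, N ≤ i → Function.Bijective (r i) := by
    intro i hi
    obtain ⟨D, g, h, hT⟩ :=
      Pretriangulated.distinguished_cocone_triangle (E.map (homOfLE (Nat.le_succ i)))
    have hD0 : D⟦(0 : ℤ)⟧ ∈ μ.M (max i₀ i₁ + 1) :=
      hN i (i + 1) hi (Nat.lt_succ_self i) D g h hT
    have hDi₀ : D⟦(0 : ℤ)⟧ ∈ μ.M i₀ := μ.subset_of_le (by omega) hD0
    have hDi₁ : D⟦(0 : ℤ)⟧ ∈ μ.M i₁ := μ.subset_of_le (by omega) hD0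
    have v0 : ∀ k : F.obj D ⟶ Xt, k = 0 := by
      intro k
      exact hom_zero_of_iso
        (F.mapIso (((shiftFunctorZero S ℤ).app D).symm ≪≫
          ((shiftFunctorZero S ℤ).app (D⟦(0 : ℤ)⟧)).symm))
        (hv0 _ hDi₀) k
    have v1 : ∀ k : (F.obj D)⟦(1 : ℤ)⟧ ⟶ Xt, k = 0 := by
      intro k
      exact hom_zero_of_iso
        (((F.commShiftIso (1 : ℤ)).app D).symm ≪≫
          F.mapIso ((shiftFunctor S (1 : ℤ)).mapIso ((shiftFunctorZero S ℤ).app D).symm))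
        (hv1 _ hDi₁) k
    exact bij_of_cone_vanish F E Xt i D g h hT v0 v1
  obtain ⟨u, hu⟩ := exists_seq_sol r N hbij
    (fun i => (shiftFunctor T (1 : ℤ)).map (Sigma.ι (fun i : ℕ => F.obj (E.obj i)) i) ≫ θ)
  -- `C⟦1⟧` with the shifted injections is a colimit
  have hc : IsColimit ((shiftFunctor T (1 : ℤ)).mapCocone
      (colimit.cocone (Discrete.functor fun i : ℕ => F.obj (E.obj i)))) :=
    isColimitOfPreserves _ (colimit.isColimit _)
  let K : Cocone ((Discrete.functor fun i : ℕ => F.obj (E.obj i)) ⋙ shiftFunctor T (1 : ℤ)) :=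
    { pt := Xt, ι := Discrete.natTrans (fun i => u i.as) }
  have hfac : ∀ i : ℕ, (shiftFunctor T (1 : ℤ)).map (Sigma.ι (fun i : ℕ => F.obj (E.obj i)) i)
      ≫ hc.desc K = u i := fun i => hc.fac K ⟨i⟩
  have hθeq : θ = (shiftFunctor T (1 : ℤ)).map (oneMinusShift F E) ≫ hc.desc K := by
    refine hc.hom_ext (fun j => ?_)
    obtain ⟨i⟩ := j
    have expand : Sigma.ι (fun i : ℕ => F.obj (E.obj i)) i ≫ oneMinusShift F E
        = Sigma.ι (fun i : ℕ => F.obj (E.obj i)) i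
          - F.map (E.map (homOfLE (Nat.le_succ i))) ≫ Sigma.ι (fun i : ℕ => F.obj (E.obj i)) (i + 1) := by
      simp [oneMinusShift, shiftMapCoprod, Preadditive.comp_sub]
    have lhs : ((shiftFunctor T (1 : ℤ)).mapCocone
        (colimit.cocone (Discrete.functor fun i : ℕ => F.obj (E.obj i)))).ι.app ⟨i⟩
        = (shiftFunctor T (1 : ℤ)).map (Sigma.ι (fun i : ℕ => F.obj (E.obj i)) i) := rfl
    rw [lhs]
    have step : (shiftFunctor T (1 : ℤ)).map (Sigma.ι (fun i : ℕ => F.obj (E.obj i)) i)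
        ≫ (shiftFunctor T (1 : ℤ)).map (oneMinusShift F E) ≫ hc.desc K
        = u i - r i (u (i + 1)) := by
      rw [← Category.assoc, ← Functor.map_comp, expand, Functor.map_sub,
        Preadditive.sub_comp, Functor.map_comp, Category.assoc, hfac i]
      have : (shiftFunctor T (1 : ℤ)).map (Sigma.ι (fun i : ℕ => F.obj (E.obj i)) (i + 1))
          ≫ hc.desc K = u (i + 1) := hfac (i + 1)
      rw [this]
      rfl
    rw [step, hu i]
  rw [hθeq, ← Category.assoc]
  have hzero : δ ≫ (shiftFunctor T (1 : ℤ)).map (oneMinusShift F E) = 0 :=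
    comp_distTriang_mor_zero₃₁ _ hhoc
  rw [hzero, zero_comp]

end Aux

/-- for a good extension `F : S ⥤ T`, a homotopy colimit `E` of a Cauchy
sequence, and `X ∈ T` with `y(X) ∈ Fc(S)`, the natural map
`Hom_T(E, X) ⟶ Hom_{Mod-S}(y(E), y(X))` is an isomorphism. -/
theorem statement4 [F.Full] [F.Faithful] [F.CommShift ℤ] [F.IsTriangulated]
    (μ : TriMetric S) (hgood : GoodExtension F μ)
    (E : ℕ ⥤ S) (hE : CauchySeq μ E)
    (Ept : T) (π : (∐ fun i : ℕ => F.obj (E.obj i)) ⟶ Ept)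
    (δ : Ept ⟶ (∐ fun i : ℕ => F.obj (E.obj i))⟦(1 : ℤ)⟧)
    (hhoc : IsHoColim F E Ept π δ)
    (Xt : T) (hX : yObj F Xt ∈ Fc μ) :
    Function.Bijective (fun φ : Ept ⟶ Xt => yHom F φ) := by
  have hYcol : IsYColimit F E Ept π := hgood E hE Ept π δ hhoc
  constructor
  · -- injectivity
    intro φ₁ φ₂ hφ
    dsimp only at hφ
    have hsub : yHom F (φ₁ - φ₂) = 0 := by rw [yHom_sub, hφ, sub_self]
    have happ : ∀ (s : S) (g : F.obj s ⟶ Ept), g ≫ (φ₁ - φ₂) = 0 := by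
      intro s g
      have h2 := congrArg (fun (q : yObj F Ept ⟶ yObj F Xt) => q.app (Opposite.op s) g) hsub
      dsimp only at h2
      rw [yHom_app_apply] at h2
      simp at h2
      rw [Preadditive.comp_sub]
      exact h2
    have hπψ : π ≫ (φ₁ - φ₂) = 0 := by
      refine colimit.hom_ext (fun j => ?_)
      obtain ⟨i⟩ := j
      have h3 := happ (E.obj i) (Sigma.ι (fun i : ℕ => F.obj (E.obj i)) i ≫ π)
      rw [Category.assoc] at h3
      rw [← Category.assoc]
      simpa using h3
    obtain ⟨θ, hθ⟩ := Triangle.yoneda_exact₃ _ hhoc (φ₁ - φ₂) hπψ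
    have hz : δ ≫ θ = 0 := comp_delta_zero F E μ hE Ept π δ hhoc Xt hX θ
    have : φ₁ - φ₂ = 0 := by rw [hθ]; exact hz
    exact sub_eq_zero.mp this
  · -- surjectivity
    intro Φ
    let f : ∀ i : ℕ, F.obj (E.obj i) ⟶ Xt := fun i =>
      Φ.app (Opposite.op (E.obj i)) (Sigma.ι (fun i : ℕ => F.obj (E.obj i)) i ≫ π)
    have hπs : oneMinusShift F E ≫ π = 0 := comp_distTriang_mor_zero₁₂ _ hhoc
    have hsπ : ∀ i : ℕ, F.map (E.map (homOfLE (Nat.le_succ i)))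
        ≫ (Sigma.ι (fun i : ℕ => F.obj (E.obj i)) (i + 1) ≫ π)
        = Sigma.ι (fun i : ℕ => F.obj (E.obj i)) i ≫ π := by
      intro i
      have h2 := Sigma.ι (fun i : ℕ => F.obj (E.obj i)) i ≫= hπs
      rw [comp_zero, oneMinusShift, Preadditive.sub_comp, Preadditive.comp_sub,
        Category.id_comp, sub_eq_zero] at h2
      have h3 : Sigma.ι (fun i : ℕ => F.obj (E.obj i)) i ≫ shiftMapCoprod F E
          = F.map (E.map (homOfLE (Nat.le_succ i)))
            ≫ Sigma.ι (fun i : ℕ => F.obj (E.obj i)) (i + 1) := by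
        simp [shiftMapCoprod]
      rw [← Category.assoc, ← h3, Category.assoc, ← h2]
    have hcompat : ∀ i : ℕ, F.map (E.map (homOfLE (Nat.le_succ i))) ≫ f (i + 1) = f i := by
      intro i
      have h2 : ((yObj F Ept).map (E.map (homOfLE (Nat.le_succ i))).op
          ≫ Φ.app (Opposite.op (E.obj i)))
            (Sigma.ι (fun i : ℕ => F.obj (E.obj i)) (i + 1) ≫ π)
          = (Φ.app (Opposite.op (E.obj (i + 1)))
          ≫ (yObj F Xt).map (E.map (homOfLE (Nat.le_succ i))).op)
            (Sigma.ι (fun i : ℕ => F.obj (E.obj i)) (i + 1) ≫ π) := by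
        rw [Φ.naturality]
      have h3 : Φ.app (Opposite.op (E.obj i)) (F.map (E.map (homOfLE (Nat.le_succ i)))
          ≫ (Sigma.ι (fun i : ℕ => F.obj (E.obj i)) (i + 1) ≫ π))
          = F.map (E.map (homOfLE (Nat.le_succ i))) ≫ f (i + 1) := h2
      rw [hsπ i] at h3
      exact h3.symm
    have h1ms : oneMinusShift F E ≫ Sigma.desc f = 0 := by
      refine colimit.hom_ext (fun j => ?_)
      obtain ⟨i⟩ := j
      have expand : Sigma.ι (fun i : ℕ => F.obj (E.obj i)) i ≫ oneMinusShift F E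
          = Sigma.ι (fun i : ℕ => F.obj (E.obj i)) i
            - F.map (E.map (homOfLE (Nat.le_succ i)))
              ≫ Sigma.ι (fun i : ℕ => F.obj (E.obj i)) (i + 1) := by
        simp [oneMinusShift, shiftMapCoprod, Preadditive.comp_sub]
      rw [← Category.assoc]
      have h4 : (Sigma.ι (fun i : ℕ => F.obj (E.obj i)) i ≫ oneMinusShift F E) ≫ Sigma.desc f
          = f i - F.map (E.map (homOfLE (Nat.le_succ i))) ≫ f (i + 1) := by
        rw [expand, Preadditive.sub_comp, Category.assoc]
        simp
      rw [h4, hcompat i, sub_self]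
      simp
    obtain ⟨φ, hφ⟩ := Triangle.yoneda_exact₂ _ hhoc (Sigma.desc f) h1ms
    have hw : ∀ i : ℕ, preadditiveYoneda.map (E.map (homOfLE (Nat.le_succ i)))
        ≫ yMap F (f (i + 1)) = yMap F (f i) := by
      intro i
      rw [yoneda_comp_yMap, hcompat i]
    obtain ⟨uu, -, huniq⟩ := hYcol (yObj F Xt) (fun i => yMap F (f i)) hw
    have hΦeq : ∀ i : ℕ, yMap F (Sigma.ι (fun i : ℕ => F.obj (E.obj i)) i ≫ π) ≫ Φ
        = yMap F (f i) := fun i => yMap_comp_natTrans F _ Φ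
    have hφeq : ∀ i : ℕ, yMap F (Sigma.ι (fun i : ℕ => F.obj (E.obj i)) i ≫ π) ≫ yHom F φ
        = yMap F (f i) := by
      intro i
      refine (yMap_comp_yHom F _ φ).trans ?_
      congr 1
      have hφ2 : Sigma.desc f = π ≫ φ := hφ
      refine (Category.assoc (Sigma.ι (fun i : ℕ => F.obj (E.obj i)) i) π φ).trans ?_
      rw [← hφ2]
      exact Sigma.ι_desc f i
    have e1 := huniq _ hφeq
    have e2 := huniq _ hΦeq
    exact ⟨φ, by dsimp only; rw [e1, ← e2]⟩

end Stmt4
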